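/- arXiv:1712.06099 — 2 statements merged into one kernel-verified Lean document; each statement's English description precedes it below -/
import Mathlib

section
/- For every integer n ≥ 2, the local dimension of the standard example S_n is at most 3. -/
/-- A partial linear extension (ple) of a poset `α`: a set `dom` together with a
linear order `rel` on `dom` extending the restriction of the partial order to `dom`. -/
structure PLE (α : Type*) [PartialOrder α] where
  dom : Set α
  rel : α → α → Prop
  refl : ∀ x ∈ dom, rel x x
  antisymm : ∀ x ∈ dom, ∀ y ∈ dom, rel x y → rel y x → x = y
  trans : ∀ x ∈ dom, ∀ y ∈ dom, ∀ z ∈ dom, rel x y → rel y z → rel x z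
  total : ∀ x ∈ dom, ∀ y ∈ dom, rel x y ∨ rel y x
  extends_le : ∀ x ∈ dom, ∀ y ∈ dom, x ≤ y → rel x y

/-- `μ(u, 𝓛)`: the number of members of the family `𝓛` whose domain contains `u`. -/
noncomputable def mu {α : Type*} [PartialOrder α] {m : ℕ} (L : Fin m → PLE α) (u : α) : ℕ :=
  Set.ncard {i : Fin m | u ∈ (L i).dom}

/-- A family of ple's is a local realizer when every strict comparability is witnessed
and every incomparable pair is reversed by some member. -/
def IsLocalRealizer {α : Type*} [PartialOrder α] {m : ℕ} (L : Fin m → PLE α) : Prop :=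
  (∀ x y : α, x < y → ∃ i, x ∈ (L i).dom ∧ y ∈ (L i).dom ∧ (L i).rel x y) ∧
  (∀ x y : α, ¬ x ≤ y → ¬ y ≤ x → ∃ i, x ∈ (L i).dom ∧ y ∈ (L i).dom ∧ (L i).rel y x)

/-- The local dimension: the least positive `d` admitting a local realizer `𝓛`
with `μ(u,𝓛) ≤ d` for every `u`. -/
noncomputable def localDim (α : Type*) [PartialOrder α] : ℕ :=
  sInf {d : ℕ | 0 < d ∧ ∃ m : ℕ, ∃ L : Fin m → PLE α,
    IsLocalRealizer L ∧ ∀ u : α, mu L u ≤ d}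


/-- The elements of the standard example `S_n`: minimal elements `a i`, maximal elements `b i`. -/
inductive SElt (n : ℕ) : Type
  | a : Fin n → SElt n
  | b : Fin n → SElt n

/-- The order of the standard example: `a i < b j` iff `i ≠ j`, nothing else. -/
instance (n : ℕ) : PartialOrder (SElt n) where
  le x y := x = y ∨ ∃ i j : Fin n, x = .a i ∧ y = .b j ∧ i ≠ j
  le_refl x := Or.inl rfl
  le_trans := by
    rintro x y z (rfl | ⟨i, j, rfl, rfl, hij⟩) hyz
    · exact hyz
    · rcases hyz with rfl | ⟨i', j', h1, h2, h3⟩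
      · exact Or.inr ⟨i, j, rfl, rfl, hij⟩
      · exact absurd h1 (by simp)
  le_antisymm := by
    rintro x y (rfl | ⟨i, j, rfl, rfl, hij⟩) hyx
    · rfl
    · rcases hyx with h | ⟨i', j', h1, h2, h3⟩
      · exact h.symm
      · exact absurd h1 (by simp)

lemma SElt.le_iff {n : ℕ} (x y : SElt n) :
    x ≤ y ↔ x = y ∨ ∃ i j : Fin n, x = .a i ∧ y = .b j ∧ i ≠ j := Iff.rfl

/-- rank function for the first full linear extension. -/
def rk1 {n : ℕ} : SElt n → ℕ
  | .a i => i
  | .b i => 2 * n - 1 - i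

/-- rank function for the second full linear extension. -/
def rk2 {n : ℕ} : SElt n → ℕ
  | .a i => n - 1 - i
  | .b i => n + i

lemma rk1_inj {n : ℕ} : Function.Injective (rk1 (n := n)) := by
  rintro (i | i) (j | j) h <;> simp only [rk1] at h <;>
    first
    | (congr 1; exact Fin.ext (by have := i.isLt; have := j.isLt; omega))
    | (exact absurd h (by have := i.isLt; have := j.isLt; omega))

lemma rk2_inj {n : ℕ} : Function.Injective (rk2 (n := n)) := by
  rintro (i | i) (j | j) h <;> simp only [rk2] at h <;>
    first
    | (congr 1; exact Fin.ext (by have := i.isLt; have := j.isLt; omega))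
    | (exact absurd h (by have := i.isLt; have := j.isLt; omega))

lemma rk1_mono {n : ℕ} {x y : SElt n} (h : x ≤ y) : rk1 x ≤ rk1 y := by
  rcases (SElt.le_iff x y).1 h with rfl | ⟨i, j, rfl, rfl, hij⟩
  · exact le_rfl
  · simp only [rk1]; have := i.isLt; have := j.isLt; omega

lemma rk2_mono {n : ℕ} {x y : SElt n} (h : x ≤ y) : rk2 x ≤ rk2 y := by
  rcases (SElt.le_iff x y).1 h with rfl | ⟨i, j, rfl, rfl, hij⟩
  · exact le_rfl
  · simp only [rk2]; have := i.isLt; have := j.isLt; omega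

/-- A full ple from an injective monotone rank function. -/
def fullPLE {n : ℕ} (r : SElt n → ℕ) (hr : Function.Injective r)
    (hm : ∀ {x y : SElt n}, x ≤ y → r x ≤ r y) : PLE (SElt n) where
  dom := Set.univ
  rel x y := r x ≤ r y
  refl _ _ := le_refl _
  antisymm _ _ _ _ h1 h2 := hr (le_antisymm h1 h2)
  trans _ _ _ _ _ _ := le_trans
  total _ _ _ _ := le_total _ _
  extends_le _ _ _ _ h := hm h

/-- The two-element ple with `b i` below `a i`. -/
def pairPLE {n : ℕ} (i : Fin n) : PLE (SElt n) where
  dom := {SElt.a i, SElt.b i}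
  rel x y := x = y ∨ (x = SElt.b i ∧ y = SElt.a i)
  refl _ _ := Or.inl rfl
  antisymm := by
    rintro x _ y _ (rfl | ⟨rfl, rfl⟩) (h | ⟨h1, h2⟩)
    · rfl
    · rfl
    · exact h.symm
    · exact absurd h2 (by simp)
  trans := by
    rintro x _ y _ z _ (rfl | ⟨rfl, rfl⟩) (h | ⟨h1, h2⟩)
    · exact Or.inl h
    · exact Or.inr ⟨h1, h2⟩
    · subst h; exact Or.inr ⟨rfl, rfl⟩
    · exact absurd h1 (by simp)
  total := by
    rintro x (rfl | rfl) y (rfl | rfl)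
    · exact Or.inl (Or.inl rfl)
    · exact Or.inr (Or.inr ⟨rfl, rfl⟩)
    · exact Or.inl (Or.inr ⟨rfl, rfl⟩)
    · exact Or.inl (Or.inl rfl)
  extends_le := by
    rintro x hx y hy h
    rcases (SElt.le_iff x y).1 h with rfl | ⟨i', j', rfl, rfl, hij⟩
    · exact Or.inl rfl
    · rcases hx with hx | hx
      · rcases hy with hy | hy
        · exact absurd hy (by simp)
        · have : i' = i := by simpa [SElt.a.injEq] using hx
          have : j' = i := by simpa [SElt.b.injEq] using hy
          exact absurd (by omega : i' = j') hij
      · exact absurd hx (by simp)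

/-- The family of ples realizing `S_n` locally with multiplicity 3. -/
def famL (n : ℕ) : Fin (n + 2) → PLE (SElt n) := fun i =>
  if h : (i : ℕ) = 0 then fullPLE rk1 rk1_inj rk1_mono
  else if h1 : (i : ℕ) = 1 then fullPLE rk2 rk2_inj rk2_mono
  else pairPLE ⟨(i : ℕ) - 2, by omega⟩

lemma famL_zero (n : ℕ) : famL n ⟨0, by omega⟩ = fullPLE rk1 rk1_inj rk1_mono := by
  simp [famL]

lemma famL_one (n : ℕ) : famL n ⟨1, by omega⟩ = fullPLE rk2 rk2_inj rk2_mono := by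
  simp [famL]

lemma famL_pair (n : ℕ) (k : Fin n) :
    famL n ⟨(k : ℕ) + 2, by omega⟩ = pairPLE k := by
  have h2 : ((⟨(k : ℕ) + 2, by omega⟩ : Fin (n + 2)) : ℕ) = (k : ℕ) + 2 := rfl
  simp only [famL, h2]
  rw [dif_neg (by omega), dif_neg (by omega)]
  congr 1

/-- The local dimension of the standard example `S_n` is at most `3`. -/
theorem localDim_standardExample_le_three (n : ℕ) (hn : 2 ≤ n) :
    localDim (SElt n) ≤ 3 := by
  apply Nat.sInf_le
  refine ⟨by norm_num, n + 2, famL n, ⟨?_, ?_⟩, ?_⟩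
  · -- comparabilities
    rintro x y hxy
    rcases (SElt.le_iff x y).1 hxy.le with rfl | ⟨i, j, rfl, rfl, hij⟩
    · exact absurd rfl hxy.ne
    · refine ⟨⟨0, by omega⟩, ?_⟩
      rw [famL_zero]
      refine ⟨trivial, trivial, ?_⟩
      show rk1 (SElt.a i) ≤ rk1 (SElt.b j)
      simp only [rk1]
      have := i.isLt; have := j.isLt; omega
  · -- incomparabilities
    rintro (i | i) (j | j) hxy hyx
    · -- a i, a j : i ≠ j
      have hij : i ≠ j := fun h => hxy (by rw [h])
      rcases le_or_gt (j : ℕ) (i : ℕ) with h | h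
      · refine ⟨⟨0, by omega⟩, ?_⟩
        rw [famL_zero]
        exact ⟨trivial, trivial, by show rk1 _ ≤ rk1 _; simp only [rk1]; omega⟩
      · refine ⟨⟨1, by omega⟩, ?_⟩
        rw [famL_one]
        refine ⟨trivial, trivial, ?_⟩
        show rk2 (SElt.a j) ≤ rk2 (SElt.a i)
        simp only [rk2]
        have := j.isLt; omega
    · -- a i, b j : must have i = j
      have hij : i = j := by
        by_contra h
        exact hxy (Or.inr ⟨i, j, rfl, rfl, fun hh => h hh⟩)
      subst hij
      refine ⟨⟨(i : ℕ) + 2, by omega⟩, ?_⟩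
      rw [famL_pair]
      exact ⟨Or.inl rfl, Or.inr rfl, Or.inr ⟨rfl, rfl⟩⟩
    · -- b i, a j : must have i = j
      have hij : j = i := by
        by_contra h
        exact hyx (Or.inr ⟨j, i, rfl, rfl, fun hh => h hh⟩)
      subst hij
      refine ⟨⟨0, by omega⟩, ?_⟩
      rw [famL_zero]
      refine ⟨trivial, trivial, ?_⟩
      show rk1 (SElt.a j) ≤ rk1 (SElt.b j)
      simp only [rk1]
      have := j.isLt; omega
    · -- b i, b j : i ≠ j
      have hij : i ≠ j := fun h => hxy (by rw [h])
      rcases le_or_gt (i : ℕ) (j : ℕ) with h | h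
      · refine ⟨⟨0, by omega⟩, ?_⟩
        rw [famL_zero]
        refine ⟨trivial, trivial, ?_⟩
        show rk1 (SElt.b j) ≤ rk1 (SElt.b i)
        simp only [rk1]
        have := i.isLt; have := j.isLt; omega
      · refine ⟨⟨1, by omega⟩, ?_⟩
        rw [famL_one]
        refine ⟨trivial, trivial, ?_⟩
        show rk2 (SElt.b j) ≤ rk2 (SElt.b i)
        simp only [rk2]
        omega
  · -- multiplicity
    intro u
    have key : ∀ k : Fin n, {i : Fin (n + 2) | (SElt.a k : SElt n) ∈ (famL n i).dom} ⊆
        {⟨0, by omega⟩, ⟨1, by omega⟩, ⟨(k : ℕ) + 2, by omega⟩} ∧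
        {i : Fin (n + 2) | (SElt.b k : SElt n) ∈ (famL n i).dom} ⊆
        {⟨0, by omega⟩, ⟨1, by omega⟩, ⟨(k : ℕ) + 2, by omega⟩} := by
      intro k
      constructor <;>
      · intro i hi
        simp only [Set.mem_setOf_eq, famL] at hi
        by_cases h0 : (i : ℕ) = 0
        · exact Or.inl (Fin.ext h0)
        by_cases h1 : (i : ℕ) = 1
        · exact Or.inr (Or.inl (Fin.ext h1))
        rw [dif_neg h0, dif_neg h1] at hi
        simp only [pairPLE, Set.mem_insert_iff, Set.mem_singleton_iff] at hi
        rcases hi with hi | hi <;>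
        first
        | · refine Or.inr (Or.inr (Fin.ext ?_))
            have h3 : (k : ℕ) = (i : ℕ) - 2 := by
              first
              | exact congrArg Fin.val (SElt.a.inj hi)
              | exact congrArg Fin.val (SElt.b.inj hi)
            show (i : ℕ) = (k : ℕ) + 2
            omega
        | exact absurd hi (fun hh => by cases hh)
    have bound : ∀ (s : Set (Fin (n + 2))) (x y z : Fin (n + 2)),
        s ⊆ {x, y, z} → s.ncard ≤ 3 := by
      intro s x y z hs
      calc s.ncard ≤ ({x, y, z} : Set (Fin (n + 2))).ncard :=
            Set.ncard_le_ncard hs (Set.toFinite _)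
        _ ≤ 3 := by
            refine le_trans (Set.ncard_insert_le _ _) ?_
            refine Nat.add_le_add_right (le_trans (Set.ncard_insert_le _ _) ?_) 1
            simp [Set.ncard_singleton]
    rcases u with k | k
    · exact bound _ _ _ _ (key k).1
    · exact bound _ _ _ _ (key k).2
end

section
/- In the Kelly poset K_n (n ≥ 3): a_i < b_j if and only if i ≠ j; moreover the elements a_1, …, a_n are pairwise incomparable and the elements b_1, …, b_n are pairwise incomparable. Consequently, the subposet of K_n induced on {a_1,…,a_n} ∪ {b_1,…,b_n} is isomorphic to the standard example S_n. -/
/-- The elements of the Kelly poset `K n`: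
`a 1, …, a n`, `b 1, …, b n`, `w 1, …, w (n-1)`, `z 1, …, z (n-1)`. -/
inductive KElt (n : ℕ) : Type
  | a : Fin n → KElt n
  | b : Fin n → KElt n
  | w : Fin (n - 1) → KElt n
  | z : Fin (n - 1) → KElt n

namespace KElt

/-- Inclusion `Fin (n-1) → Fin n` keeping the value. -/
def lo {n : ℕ} (i : Fin (n - 1)) : Fin n := ⟨i.val, by have := i.isLt; omega⟩

/-- The map `Fin (n-1) → Fin n` sending `i` to `i + 1`. -/
def hi {n : ℕ} (i : Fin (n - 1)) : Fin n := ⟨i.val + 1, by have := i.isLt; omega⟩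

/-- The defining relations (cover relations) of the Kelly poset, with indices written
0-based: `aᵢ < wᵢ`, `wᵢ < bᵢ₊₁`, `wᵢ < wᵢ₊₁`, `aᵢ₊₁ < zᵢ`, `zᵢ < bᵢ`, `zᵢ₊₁ < zᵢ`. -/
inductive kcov {n : ℕ} : KElt n → KElt n → Prop
  | aw (i : Fin (n - 1)) : kcov (.a (lo i)) (.w i)
  | wb (i : Fin (n - 1)) : kcov (.w i) (.b (hi i))
  | ww (i j : Fin (n - 1)) : j.val = i.val + 1 → kcov (.w i) (.w j)
  | az (i : Fin (n - 1)) : kcov (.a (hi i)) (.z i)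
  | zb (i : Fin (n - 1)) : kcov (.z i) (.b (lo i))
  | zz (i j : Fin (n - 1)) : j.val = i.val + 1 → kcov (.z j) (.z i)

/-- A measure that strictly increases along the defining relations. -/
def kmeas {n : ℕ} : KElt n → ℕ
  | .a _ => 0
  | .w i => i.val + 1
  | .z i => n - i.val
  | .b _ => n + 1

theorem kcov_meas {n : ℕ} {x y : KElt n} (h : kcov x y) : kmeas x < kmeas y := by
  cases h with
  | aw i => simp [kmeas]
  | wb i => have := i.isLt; simp [kmeas]; omega
  | ww i j h => have := i.isLt; simp [kmeas]; omega
  | az i => have := i.isLt; simp [kmeas]; omega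
  | zb i => have := i.isLt; simp [kmeas] <;> omega
  | zz i j h => have := i.isLt; have := j.isLt; simp [kmeas]; omega

theorem rtg_meas {n : ℕ} {x y : KElt n} (h : Relation.ReflTransGen kcov x y) :
    kmeas x ≤ kmeas y := by
  induction h with
  | refl => exact le_rfl
  | tail _ hc ih => exact le_trans ih (le_of_lt (kcov_meas hc))

/-- The Kelly poset: reflexive–transitive closure of the defining relations. -/
instance (n : ℕ) : PartialOrder (KElt n) where
  le := Relation.ReflTransGen kcov
  le_refl _ := Relation.ReflTransGen.refl
  le_trans _ _ _ := Relation.ReflTransGen.trans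
  le_antisymm := by
    intro x y hxy hyx
    rcases Relation.ReflTransGen.cases_head hxy with rfl | ⟨c, hc, hcy⟩
    · rfl
    · exfalso
      have h1 : kmeas x < kmeas c := kcov_meas hc
      have h2 : kmeas c ≤ kmeas y := rtg_meas hcy
      have h3 : kmeas y ≤ kmeas x := rtg_meas hyx
      omega

end KElt


namespace KellyAux

open KElt

theorem le_def {n : ℕ} {x y : KElt n} : x ≤ y ↔ Relation.ReflTransGen kcov x y := Iff.rfl

/-- Invariant: the set of elements reachable from `a i`. -/
def inv {n : ℕ} (i : Fin n) : KElt n → Prop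
  | .a j => j = i
  | .w k => i.val ≤ k.val
  | .z k => k.val < i.val
  | .b j => j ≠ i

theorem inv_kcov {n : ℕ} {i : Fin n} {x y : KElt n} (h : kcov x y) (hx : inv i x) :
    inv i y := by
  cases h with
  | aw k =>
    simp only [inv, Fin.ext_iff, lo] at hx ⊢; omega
  | wb k =>
    simp only [inv, Ne, Fin.ext_iff, hi] at hx ⊢; omega
  | ww k j hj =>
    simp only [inv] at hx ⊢; omega
  | az k =>
    simp only [inv, Fin.ext_iff, hi] at hx ⊢; omega
  | zb k =>
    simp only [inv, Ne, Fin.ext_iff, lo] at hx ⊢; omega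
  | zz k j hj =>
    simp only [inv] at hx ⊢; omega

theorem inv_le {n : ℕ} {i : Fin n} {x y : KElt n} (h : x ≤ y) (hx : inv i x) : inv i y := by
  rw [le_def] at h
  induction h with
  | refl => exact hx
  | tail _ hc ih => exact inv_kcov hc ih

theorem not_a_le_b_self {n : ℕ} (i : Fin n) : ¬ (KElt.a i ≤ KElt.b i) := by
  intro h
  have : inv i (KElt.b i) := inv_le h (by simp [inv])
  simp [inv] at this

theorem a_le_w_aux {n : ℕ} (i : Fin n) :
    ∀ d : ℕ, ∀ k : Fin (n - 1), k.val - i.val = d → i.val ≤ k.val →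
      KElt.a i ≤ KElt.w k := by
  intro d
  induction d with
  | zero =>
    intro k hd hle
    have hik : lo k = i := by simp [lo, Fin.ext_iff]; omega
    rw [le_def, ← hik]
    exact Relation.ReflTransGen.single (kcov.aw k)
  | succ d ih =>
    intro k hd hle
    have hk1 : 1 ≤ k.val := by omega
    set k' : Fin (n - 1) := ⟨k.val - 1, by have := k.isLt; omega⟩ with hk'
    have h1 : KElt.a i ≤ KElt.w k' := ih k' (by simp [hk']; omega) (by simp [hk']; omega)
    rw [le_def] at h1 ⊢
    exact h1.tail (kcov.ww k' k (by simp [hk']; omega))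

theorem a_le_z_aux {n : ℕ} (i : Fin n) :
    ∀ d : ℕ, ∀ k : Fin (n - 1), i.val - 1 - k.val = d → k.val < i.val →
      KElt.a i ≤ KElt.z k := by
  intro d
  induction d with
  | zero =>
    intro k hd hlt
    have hik : hi k = i := by simp [hi, Fin.ext_iff]; omega
    rw [le_def, ← hik]
    exact Relation.ReflTransGen.single (kcov.az k)
  | succ d ih =>
    intro k hd hlt
    have hk1 : k.val + 1 < i.val := by omega
    have hlt2 : k.val + 1 < n - 1 := by have := i.isLt; omega
    set k' : Fin (n - 1) := ⟨k.val + 1, hlt2⟩ with hk'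
    have h1 : KElt.a i ≤ KElt.z k' := ih k' (by simp [hk']; omega) (by simp [hk']; omega)
    rw [le_def] at h1 ⊢
    exact h1.tail (kcov.zz k k' (by simp [hk']))

theorem a_le_b {n : ℕ} (i j : Fin n) (hij : i ≠ j) : KElt.a i ≤ KElt.b j := by
  rcases lt_or_gt_of_ne (Fin.val_ne_of_ne hij) with h | h
  · -- i < j : go through w (j-1)
    have hjlt : j.val - 1 < n - 1 := by have := j.isLt; omega
    set k : Fin (n - 1) := ⟨j.val - 1, hjlt⟩ with hk
    have h1 : KElt.a i ≤ KElt.w k := a_le_w_aux i _ k rfl (by simp [hk]; omega)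
    have hbj : hi k = j := by simp [hi, Fin.ext_iff, hk]; omega
    rw [le_def] at h1 ⊢
    rw [← hbj]
    exact h1.tail (kcov.wb k)
  · -- j < i : go through z j
    have hjlt : j.val < n - 1 := by have := i.isLt; omega
    set k : Fin (n - 1) := ⟨j.val, hjlt⟩ with hk
    have h1 : KElt.a i ≤ KElt.z k := a_le_z_aux i _ k rfl (by simp [hk]; omega)
    have hbj : lo k = j := by simp [lo, Fin.ext_iff, hk]
    rw [le_def] at h1 ⊢
    rw [← hbj]
    exact h1.tail (kcov.zb k)

theorem a_le_a {n : ℕ} {i j : Fin n} (h : KElt.a i ≤ KElt.a j) : i = j := by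
  rw [le_def] at h
  rcases Relation.ReflTransGen.cases_head h with heq | ⟨c, hc, hcy⟩
  · exact (KElt.a.injEq i j).mp heq
  · exfalso
    have h1 : kmeas (KElt.a i) < kmeas c := kcov_meas hc
    have h2 : kmeas c ≤ kmeas (KElt.a (n := n) j) := rtg_meas hcy
    simp [kmeas] at h1 h2
    omega

theorem b_le_b {n : ℕ} {i j : Fin n} (h : KElt.b i ≤ KElt.b j) : i = j := by
  rw [le_def] at h
  rcases Relation.ReflTransGen.cases_head h with heq | ⟨c, hc, hcy⟩
  · exact (KElt.b.injEq i j).mp heq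
  · cases hc

theorem not_b_le_a {n : ℕ} (i j : Fin n) : ¬ (KElt.b i ≤ KElt.a j) := by
  intro h
  rw [le_def] at h
  rcases Relation.ReflTransGen.cases_head h with heq | ⟨c, hc, hcy⟩
  · cases heq
  · cases hc

end KellyAux

/-- In the Kelly poset: `a i < b j` iff `i ≠ j`, the `a`'s are pairwise incomparable,
the `b`'s are pairwise incomparable; consequently the subposet induced on the `a`'s and
`b`'s is isomorphic to the standard example `S_n`. -/
theorem kelly_contains_standard_example (n : ℕ) (hn : 3 ≤ n) :
    (∀ i j : Fin n, (KElt.a i < KElt.b j) ↔ i ≠ j) ∧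
    (∀ i j : Fin n, i ≠ j → ¬ (KElt.a i ≤ KElt.a j)) ∧
    (∀ i j : Fin n, i ≠ j → ¬ (KElt.b i ≤ KElt.b j)) ∧
    ∃ f : SElt n → KElt n, Function.Injective f ∧
      (∀ i, f (.a i) = KElt.a i) ∧ (∀ i, f (.b i) = KElt.b i) ∧
      ∀ x y : SElt n, x ≤ y ↔ f x ≤ f y := by
  refine ⟨?_, ?_, ?_, ?_⟩
  · intro i j
    constructor
    · rintro ⟨hle, -⟩ rfl
      exact KellyAux.not_a_le_b_self i hle
    · intro hij
      refine lt_of_le_of_ne (KellyAux.a_le_b i j hij) (by simp)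
  · intro i j hij h
    exact hij (KellyAux.a_le_a h)
  · intro i j hij h
    exact hij (KellyAux.b_le_b h)
  · refine ⟨fun x => match x with | .a i => KElt.a i | .b i => KElt.b i, ?_, fun i => rfl,
      fun i => rfl, ?_⟩
    · rintro ⟨i⟩ ⟨j⟩ h <;> simp_all
    · rintro (⟨i⟩ | ⟨i⟩) (⟨j⟩ | ⟨j⟩)
      · constructor
        · rintro (h | ⟨i', j', h1, h2, h3⟩)
          · simp_all
          · exact absurd h2 (by simp)
        · intro h
          exact Or.inl (by rw [KellyAux.a_le_a h])
      · constructor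
        · rintro (h | ⟨i', j', h1, h2, h3⟩)
          · exact absurd h (by simp)
          · simp only [SElt.a.injEq, SElt.b.injEq] at h1 h2
            subst h1; subst h2
            exact KellyAux.a_le_b i j h3
        · intro h
          refine Or.inr ⟨i, j, rfl, rfl, ?_⟩
          rintro rfl
          exact KellyAux.not_a_le_b_self i h
      · constructor
        · rintro (h | ⟨i', j', h1, h2, h3⟩)
          · exact absurd h (by simp)
          · exact absurd h1 (by simp)
        · intro h
          exact absurd h (KellyAux.not_b_le_a i j)
      · constructor
        · rintro (h | ⟨i', j', h1, h2, h3⟩)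
          · simp_all
          · exact absurd h1 (by simp)
        · intro h
          exact Or.inl (by rw [KellyAux.b_le_b h])
end
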